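/- Let A be a parametric timed automaton over the alphabet Σ ⊔ {$} and let w = (ā,τ̄) be a timed word over Σ. Assume ⋃_v L_{−$}(A[v]) ≠ ∅ (union over all parameter valuations v) and let N = min{|u| : u ∈ ⋃_v L_{−$}(A[v])}. Then for every index i ≥ 1 with i + N ≤ |w| and every m ∈ {1,…,N}: if a_{i+N} ≠ a′_{N−m+1} holds for every nonempty timed word (ā′,τ̄′) ∈ ⋃_v L(A[v]), then the match set M(w,A) contains no triple (t₀,t′,v) with τ_{i+m−1} ≤ t₀ < τ_{i+m}. -/
import Mathlib


open scoped Classical NNRat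

namespace PTPM

/-- Timed words over an alphabet `α`: finite sequences of (letter, timestamp). -/
abbrev TWord (α : Type*) := List (α × ℝ)

/-- Well-formedness of a timed word: positive, strictly increasing timestamps. -/
def IsTW {α : Type*} (w : TWord α) : Prop :=
  (∀ p ∈ w, 0 < p.2) ∧ w.Chain' (fun p q => p.2 < q.2)

/-- `T(Σ)`: the set of timed words over `α`. -/
def TW (α : Type*) : Set (TWord α) := {w | IsTW w}

/-- `T^n(Σ)`: the set of timed words over `α` of length `n`. -/
def TWn (α : Type*) (n : ℕ) : Set (TWord α) := {w | IsTW w ∧ w.length = n}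

/-- The shift `w + s` of a timed word. -/
def shift {α : Type*} (w : TWord α) (s : ℝ) : TWord α := w.map fun p => (p.1, p.2 + s)

/-- Last timestamp of a timed word (`0` for the empty word). -/
def lastT {α : Type*} (w : TWord α) : ℝ := (w.getLast?.map Prod.snd).getD 0

/-- Non-absorbing concatenation `w · w'`. -/
def ncat {α : Type*} (w w' : TWord α) : TWord α := w ++ shift w' (lastT w)

/-- Non-absorbing concatenation lifted to sets of timed words. -/
def ncatS {α : Type*} (W W' : Set (TWord α)) : Set (TWord α) :=
  {u | ∃ w ∈ W, ∃ w' ∈ W', u = ncat w w'}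

/-- `τ_k`, the `k`-th timestamp (1-indexed), with `τ_0 = 0`. -/
def tau {α : Type*} (w : TWord α) (k : ℕ) : ℝ := lastT (w.take k)

/-- The subsequence `w(i,j)` (1-indexed, both inclusive; empty if `i > j`). -/
def sub {α : Type*} (w : TWord α) (i j : ℕ) : TWord α := (w.take j).drop (i - 1)

/-- Letter at position `k` (1-indexed), if any. -/
def letterAt {α : Type*} (w : TWord α) (k : ℕ) : Option α := w[k - 1]?.map Prod.fst

/-- Embedding of timed words over `Σ` into timed words over `Σ ⊔ {$}`;
the terminal character `$` is modelled by `none`. -/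
def liftW {α : Type*} (w : TWord α) : TWord (Option α) := w.map fun p => (some p.1, p.2)

/-- `T(Σ)` viewed inside the alphabet `Σ ⊔ {$}`. -/
def TWl (α : Type*) : Set (TWord (Option α)) := liftW '' TW α

/-- `T^n(Σ)` viewed inside the alphabet `Σ ⊔ {$}`. -/
def TWln (α : Type*) (n : ℕ) : Set (TWord (Option α)) := liftW '' TWn α n

/-- The segment `w|_(t,t')`, a timed word over `Σ ⊔ {$}`. -/
noncomputable def seg {α : Type*} (w : TWord α) (t t' : ℝ) : TWord (Option α) :=
  (w.filter fun p => decide (t < p.2 ∧ p.2 < t')).map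
      (fun p => ((some p.1 : Option α), p.2 - t))
    ++ [((none : Option α), t' - t)]

/-- `L_{-$}`: the words of `L` with the last element removed. -/
def minusDollar {β : Type*} (L : Set (TWord β)) : Set (TWord β) :=
  {u | ∃ x ∈ L, x ≠ [] ∧ u = x.dropLast}

/-- Untimed projection of a timed word. -/
def untimed {α : Type*} (w : TWord α) : List α := w.map Prod.fst

/-- Untimed projection of a set of timed words. -/
def untimedS {α : Type*} (W : Set (TWord α)) : Set (List α) := untimed '' W

/-- `U · Σ*`: the set of finite words having a prefix in `U`. -/
def prefSet {σ : Type*} (U : Set (List σ)) : Set (List σ) := {x | ∃ u ∈ U, ∃ s, x = u ++ s}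

/-- `Ŷ = {y + s | y ∈ Y, s ≥ 0}`. -/
def hatS {α : Type*} (Y : Set (TWord α)) : Set (TWord α) :=
  {u | ∃ y ∈ Y, ∃ s : ℝ, 0 ≤ s ∧ u = shift y s}

/-- Comparison operators `⋈ ∈ {<, ≤, =, ≥, >}`. -/
inductive Cmp | lt | le | eq | ge | gt

def Cmp.eval : Cmp → ℝ → ℝ → Prop
  | .lt, a, b => a < b
  | .le, a, b => a ≤ b
  | .eq, a, b => a = b
  | .ge, a, b => b ≤ a
  | .gt, a, b => b < a

/-- Atomic guard constraints `x ⋈ d` (`d ∈ ℕ`) and `x ⋈ p` (`p` a parameter). -/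
inductive Atom (C P : Type*)
  | nat (x : C) (op : Cmp) (d : ℕ)
  | par (x : C) (op : Cmp) (p : P)

/-- A guard: a finite conjunction of atomic constraints. -/
abbrev Guard (C P : Type*) := List (Atom C P)

def Atom.sat {C P : Type*} (μ : C → ℝ) (v : P → ℚ≥0) : Atom C P → Prop
  | .nat x op d => op.eval (μ x) (d : ℝ)
  | .par x op p => op.eval (μ x) ((v p : ℚ) : ℝ)

/-- `μ ⊨ v(g)`. -/
def Guard.sat {C P : Type*} (μ : C → ℝ) (v : P → ℚ≥0) (g : Guard C P) : Prop :=
  ∀ a ∈ g, a.sat μ v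

def Atom.mapCP {C P C' P' : Type*} (fc : C → C') (fp : P → P') : Atom C P → Atom C' P'
  | .nat x op d => .nat (fc x) op d
  | .par x op p => .par (fc x) op (fp p)

def Guard.mapCP {C P C' P' : Type*} (fc : C → C') (fp : P → P') (g : Guard C P) :
    Guard C' P' :=
  g.map (Atom.mapCP fc fp)

/-- Parametric timed automaton with alphabet `α`, locations `L`, clocks `C`, parameters `P`.
An edge `(ℓ, g, a, R, ℓ')` has source `ℓ`, guard `g`, action `a`, resets `R`, target `ℓ'`. -/
structure PTA (α L C P : Type*) where
  init : L
  acc : Set L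
  edges : Set (L × Guard C P × α × Set C × L)
  finEdges : edges.Finite

/-- Reset of the clocks in `R` to `0`. -/
noncomputable def resetv {C : Type*} (μ : C → ℝ) (R : Set C) : C → ℝ :=
  fun x => if x ∈ R then 0 else μ x

/-- `Steps A v ℓ μ τ w ℓ'`: from configuration (location `ℓ`, clock valuation `μ`,
absolute time `τ`) there is a run of `A[v]` reading the timed word `w` and ending in `ℓ'`. -/
inductive Steps {α L C P : Type*} (A : PTA α L C P) (v : P → ℚ≥0) :
    L → (C → ℝ) → ℝ → TWord α → L → Prop
  | refl (ℓ : L) (μ : C → ℝ) (τ : ℝ) : Steps A v ℓ μ τ [] ℓ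
  | step {ℓ : L} {μ : C → ℝ} {τ : ℝ} {g : Guard C P} {a : α} {R : Set C} {ℓ' ℓ'' : L}
      {d : ℝ} {w : TWord α}
      (hd : 0 ≤ d)
      (he : (ℓ, g, a, R, ℓ') ∈ A.edges)
      (hg : Guard.sat (fun x => μ x + d) v g)
      (h : Steps A v ℓ' (resetv (fun x => μ x + d) R) (τ + d) w ℓ'') :
      Steps A v ℓ μ τ ((a, τ + d) :: w) ℓ''

/-- The language `L(A[v])`: associated words of accepting runs that are timed words. -/
def lang {α L C P : Type*} (A : PTA α L C P) (v : P → ℚ≥0) : Set (TWord α) :=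
  {w | IsTW w ∧ ∃ ℓ ∈ A.acc, Steps A v A.init (fun _ => 0) 0 w ℓ}

/-- `A_ℓ`: the PTA `A` with accepting set `{ℓ}`. -/
def PTA.locAcc {α L C P : Type*} (A : PTA α L C P) (ℓ : L) : PTA α L C P :=
  { A with acc := {ℓ} }

/-- The match set `M(w, A)`. -/
def matchSet {α L C P : Type*} (w : TWord α) (A : PTA (Option α) L C P) :
    Set (ℝ × ℝ × (P → ℚ≥0)) :=
  {x | 0 ≤ x.1 ∧ x.1 < x.2.1 ∧ seg w x.1 x.2.1 ∈ lang A x.2.2}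

/-- `V_{ℓ,n}`. -/
def Vset {α L C P : Type*} (A : PTA (Option α) L C P) (ℓ : L) (n : ℕ) :
    Set (P → ℚ≥0) :=
  {v | ∃ v' : P → ℚ≥0,
    (ncatS (lang (A.locAcc ℓ) v) (TWl α) ∩
      ncatS (ncatS (TWln α n) (hatS (minusDollar (lang A v')))) (TWl α)).Nonempty}

/-- The KMP-style skip value `Δ_KMP(ℓ, V) = min {n ≥ 1 | V ⊆ V_{ℓ,n}}` (min ∅ = ⊤). -/
noncomputable def DeltaKMP {α L C P : Type*} (A : PTA (Option α) L C P) (ℓ : L)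
    (V : Set (P → ℚ≥0)) : ℕ∞ :=
  sInf ((fun n : ℕ => (n : ℕ∞)) '' {n : ℕ | 1 ≤ n ∧ V ⊆ Vset A ℓ n})

/-- The non-parametric KMP-style skip value `Δ'_KMP(ℓ) = min_v Δ_KMP(ℓ, {v})`. -/
noncomputable def DeltaKMP' {α L C P : Type*} (A : PTA (Option α) L C P) (ℓ : L) : ℕ∞ :=
  ⨅ v : P → ℚ≥0, DeltaKMP A ℓ {v}

/-- Untimed words over `Σ`, viewed inside `Σ ⊔ {$}`. -/
def pureW {α : Type*} (x : List (Option α)) : Prop := ∀ c ∈ x, c ≠ none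

/-- `Σ^n · U` for sets of finite untimed words. -/
def catLen {α : Type*} (n : ℕ) (U : Set (List (Option α))) : Set (List (Option α)) :=
  {y | ∃ x u, x.length = n ∧ pureW x ∧ u ∈ U ∧ y = x ++ u}

/-- `Σ^N a Σ*`: finite words of length at least `N+1` whose `(N+1)`-st letter is `a`. -/
def sigNa {α : Type*} (N : ℕ) (a : α) : Set (List (Option α)) :=
  {x | N + 1 ≤ x.length ∧ x[N]? = some (some a)}

/-- The Quick-Search-style skip value `Δ_QS(a)` (min ∅ = ⊤). -/
noncomputable def DeltaQS {α L C P : Type*} (A : PTA (Option α) L C P) (N : ℕ) (a : α) :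
    ℕ∞ :=
  sInf ((fun n : ℕ => (n : ℕ∞)) '' {n : ℕ | 1 ≤ n ∧ ∃ v : P → ℚ≥0,
    (sigNa N a ∩ catLen n (untimedS (minusDollar (lang A v)))).Nonempty})

theorem tau_eq_getElem {α : Type*} (w : TWord α) (k : ℕ) (hk : 1 ≤ k) (hkl : k ≤ w.length) :
    tau w k = (w[k-1]'(by omega)).2 := by
  unfold tau lastT
  have hlen : (w.take k).length = k := by simp; omega
  rw [List.getLast?_eq_getElem?, hlen, List.getElem?_take, if_pos (by omega),
    List.getElem?_eq_getElem (by omega)]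
  rfl

theorem filter_eq_takeWhile_of_mono {β : Type*} (P : β → Bool) (R : β → β → Prop)
    (l : List β) (hl : l.Pairwise R)
    (hmono : ∀ a b, R a b → P a = false → P b = false) :
    l.filter P = l.takeWhile P := by
  induction l with
  | nil => rfl
  | cons a l ih =>
    rw [List.pairwise_cons] at hl
    cases h : P a with
    | true => simp [List.filter_cons, List.takeWhile_cons, h, ih hl.2]
    | false =>
      simp only [List.filter_cons, List.takeWhile_cons, h, if_neg, Bool.false_eq_true,
        not_false_eq_true, ite_false]
      exact List.filter_eq_nil_iff.mpr fun b hb => by simp [hmono a b (hl.1 b hb) h]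

/-- Lemma `QS`. -/
theorem statement3 {α L C P : Type*} [Finite α] [Finite L] [Finite C] [Finite P]
    (A : PTA (Option α) L C P) (w : TWord α) (hw : IsTW w)
    (N : ℕ)
    (hNmem : ∃ (v : P → ℚ≥0) (u : TWord (Option α)),
      u ∈ minusDollar (lang A v) ∧ u.length = N)
    (hNmin : ∀ v : P → ℚ≥0, ∀ u ∈ minusDollar (lang A v), N ≤ u.length)
    (i : ℕ) (hi : 1 ≤ i) (hiN : i + N ≤ w.length)
    (a : α) (ha : letterAt w (i + N) = some a)
    (m : ℕ) (hm : 1 ≤ m) (hmN : m ≤ N)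
    (hdiff : ∀ v : P → ℚ≥0, ∀ u ∈ lang A v, u ≠ [] →
      letterAt u (N - m + 1) ≠ some (some a)) :
    ∀ (t₀ t' : ℝ) (v : P → ℚ≥0),
      tau w (i + m - 1) ≤ t₀ → t₀ < tau w (i + m) → (t₀, t', v) ∉ matchSet w A := by
  intro t₀ t' v ht₀ ht' hmem
  obtain ⟨h0, hlt, hlang⟩ := hmem
  set Pb : α × ℝ → Bool := fun p => decide (t₀ < p.2 ∧ p.2 < t') with hPb
  set F : TWord α := w.filter Pb with hFdef
  have hseg : seg w t₀ t'
      = F.map (fun p => ((some p.1 : Option α), p.2 - t₀)) ++ [((none : Option α), t' - t₀)] :=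
    rfl
  have hune : seg w t₀ t' ≠ [] := by rw [hseg]; simp
  have hdl : (seg w t₀ t').dropLast
      = F.map (fun p => ((some p.1 : Option α), p.2 - t₀)) := by
    rw [hseg, List.dropLast_concat]
  -- N ≤ |F|
  have hNle : N ≤ F.length := by
    have h1 := hNmin v _ ⟨_, hlang, hune, rfl⟩
    rw [hdl, List.length_map] at h1
    exact h1
  -- pairwise increasing timestamps
  haveI : IsTrans (α × ℝ) (fun p q => p.2 < q.2) := ⟨fun a b c => lt_trans⟩
  have hp : w.Pairwise (fun p q => p.2 < q.2) := List.isChain_iff_pairwise.mp hw.2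
  have hpg := List.pairwise_iff_getElem.mp hp
  set k : ℕ := i + m - 1 with hkdef
  have hk1 : 1 ≤ i + m := by omega
  have hkw : k < w.length := by omega
  have htk : tau w (i + m) = (w[k]'hkw).2 := by
    have := tau_eq_getElem w (i + m) (by omega) (by omega)
    simpa [hkdef] using this
  -- every element of `w.drop k` has timestamp > t₀
  have hdropgt : ∀ p ∈ w.drop k, t₀ < p.2 := by
    intro p hpmem
    obtain ⟨j, hj, hje⟩ := List.mem_iff_getElem.mp hpmem
    rw [List.getElem_drop] at hje
    have hklen : k + j < w.length := by
      have := hj; rw [List.length_drop] at this; omega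
    have hle : (w[k]'hkw).2 ≤ (w[k+j]'hklen).2 := by
      rcases Nat.eq_zero_or_pos j with hj0 | hj0
      · subst hj0; rfl
      · exact le_of_lt (hpg k (k+j) hkw hklen (by omega))
    rw [← hje]
    calc t₀ < (w[k]'hkw).2 := htk ▸ ht'
      _ ≤ _ := hle
  -- prefix of w fails the filter
  have hfilter_take : (w.take k).filter Pb = [] := by
    refine List.filter_eq_nil_iff.mpr fun p hpmem => ?_
    obtain ⟨j, hj, hje⟩ := List.mem_iff_getElem.mp hpmem
    have hjk : j < k := by simpa using hj.trans_le (by simp)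
    have hjw : j < w.length := by omega
    have hje' : (w[j]'hjw) = p := by
      rw [← hje, List.getElem_take]
    have hple : p.2 ≤ t₀ := by
      rcases Nat.lt_or_ge k 1 with h | h
      · omega
      have htk1 : tau w k = (w[k-1]'(by omega)).2 := tau_eq_getElem w k h (by omega)
      have : p.2 ≤ (w[k-1]'(by omega)).2 := by
        rcases Nat.lt_or_ge j (k-1) with hj' | hj'
        · exact le_of_lt (hje' ▸ hpg j (k-1) hjw (by omega) hj')
        · have : j = k - 1 := by omega
          subst this; rw [hje']
      calc p.2 ≤ (w[k-1]'(by omega)).2 := this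
        _ = tau w k := htk1.symm
        _ ≤ t₀ := by simpa [hkdef] using ht₀
    simp [hPb]
    intro h; linarith
  -- F = filter on the dropped part
  have hFdrop : F = (w.drop k).filter Pb := by
    conv_lhs => rw [hFdef, ← List.take_append_drop k w, List.filter_append, hfilter_take]
    rw [List.nil_append]
  -- filter = takeWhile on the dropped part
  have hFtw : F = (w.drop k).takeWhile Pb := by
    rw [hFdrop]
    refine filter_eq_takeWhile_of_mono Pb (fun p q => t₀ < p.2 ∧ p.2 < q.2) _ ?_ ?_
    · refine List.Pairwise.imp_of_mem ?_ (hp.sublist (List.drop_sublist ..))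
      intro p q hpm hqm hlt'
      exact ⟨hdropgt p hpm, hlt'⟩
    · rintro p q ⟨hpt, hpq⟩ hPp
      simp only [hPb, decide_eq_false_iff_not, not_and, not_lt] at hPp ⊢
      intro hq
      have := hPp hpt
      linarith
  -- F is a prefix of w.drop k, so its (N-m)-th element is w[i+N-1]
  have hNm : N - m < F.length := by omega
  have hFget : F[N-m]? = w[i+N-1]? := by
    obtain ⟨t, htl⟩ := List.takeWhile_prefix (l := w.drop k) Pb
    have h1 : (w.drop k)[N-m]? = F[N-m]? := by
      rw [← htl, List.getElem?_append_left (by rw [← hFtw]; exact hNm), hFtw]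
    rw [← h1, List.getElem?_drop]
    congr 1
    omega
  -- extract the element
  have hiNw : i + N - 1 < w.length := by omega
  have hwa : (w[i+N-1]'hiNw).1 = a := by
    have := ha
    unfold letterAt at this
    rw [show i + N - 1 = i + N - 1 by rfl] at this
    rw [List.getElem?_eq_getElem hiNw] at this
    simpa using this
  -- compute letterAt of the segment
  have hletter : letterAt (seg w t₀ t') (N - m + 1) = some (some a) := by
    unfold letterAt
    have hidx : N - m + 1 - 1 = N - m := by omega
    rw [hidx, hseg]
    rw [List.getElem?_append_left (by rw [List.length_map]; exact hNm), List.getElem?_map]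
    rw [hFget, List.getElem?_eq_getElem hiNw]
    simp [hwa]
  exact hdiff v _ hlang hune hletter


end PTPM
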